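/- For any ring R and A ∈ M_n(R), the matrix n·A*·A − tr(A*·A)·I has trace zero and all of its entries lie in the additive commutator subgroup [R,R]. -/

import Mathlib

open Matrix Polynomial

/-- The symmetric determinant of a square matrix over a possibly noncommutative ring:
`sdet A = Σ_{α,β ∈ S_n} sgn α · sgn β · a_{α 1, β 1} ⋯ a_{α n, β n}` (ordered product). -/
def sdet {R : Type*} [Ring R] {n : ℕ} (A : Matrix (Fin n) (Fin n) R) : R :=
  ∑ α : Equiv.Perm (Fin n), ∑ β : Equiv.Perm (Fin n),
    ((Equiv.Perm.sign α : ℤ) * (Equiv.Perm.sign β : ℤ)) •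
      (List.ofFn fun i : Fin n => A (α i) (β i)).prod

/-- The preadjoint matrix `A*`: its `(r,s)` entry is the sum over `α, β ∈ S_n`
with `α s = s` and `β s = r` of `sgn α · sgn β` times the ordered product of the
entries `a_{α i, β i}` for `i ≠ s`. -/
def preadj {R : Type*} [Ring R] {n : ℕ} (A : Matrix (Fin n) (Fin n) R) :
    Matrix (Fin n) (Fin n) R :=
  fun r s =>
    ∑ α ∈ Finset.univ.filter (fun α : Equiv.Perm (Fin n) => α s = s),
      ∑ β ∈ Finset.univ.filter (fun β : Equiv.Perm (Fin n) => β s = r),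
        ((Equiv.Perm.sign α : ℤ) * (Equiv.Perm.sign β : ℤ)) •
          (((List.finRange n).filter (fun i => i ≠ s)).map fun i => A (α i) (β i)).prod

theorem Equiv.Perm.apply_inv_self {α : Type*} (f : Equiv.Perm α) (x : α) : f (f⁻¹ x) = x :=
  Equiv.apply_symm_apply f x

theorem Equiv.Perm.inv_apply_self {α : Type*} (f : Equiv.Perm α) (x : α) : f⁻¹ (f x) = x :=
  Equiv.symm_apply_apply f x

namespace PreadjAux

variable {R : Type*} [Ring R]

/-- the additive commutator subgroup `[R,R]` -/
def cgrp (R : Type*) [Ring R] : AddSubgroup R :=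
  AddSubgroup.closure {x : R | ∃ u v : R, x = u * v - v * u}

/-- quotient map mod `[R,R]` -/
def tau : R →+ R ⧸ cgrp R := QuotientAddGroup.mk' (cgrp R)

lemma mem_of_tau {x : R} (h : tau x = 0) : x ∈ cgrp R :=
  (QuotientAddGroup.eq_zero_iff x).mp h

lemma tau_mul_comm (a b : R) : tau (a * b) = tau (b * a) :=
  QuotientAddGroup.eq.mpr (by
    rw [neg_add_eq_sub]
    exact AddSubgroup.subset_closure ⟨b, a, rfl⟩)

lemma tau_prod_append (l₁ l₂ : List R) : tau (l₁ ++ l₂).prod = tau (l₂ ++ l₁).prod := by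
  rw [List.prod_append, List.prod_append, tau_mul_comm]

lemma tau_prod_rotate (l : List R) (m : ℕ) : tau ((l.rotate m).prod) = tau l.prod := by
  rcases eq_or_ne l [] with rfl | h
  · simp
  · have hl : 0 < l.length := List.length_pos_iff.mpr h
    rw [← List.rotate_mod, List.rotate_eq_drop_append_take (Nat.mod_lt _ hl).le,
      tau_prod_append, List.take_append_drop]

/-- ordered product of entries along a pair of index functions -/
def FF {n : ℕ} (A : Matrix (Fin n) (Fin n) R) (α β : Fin n → Fin n) : R :=
  ((List.finRange n).map fun i => A (α i) (β i)).prod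

section Pos

variable {m : ℕ} (A : Matrix (Fin (m + 1)) (Fin (m + 1)) R)

local notation "n" => m + 1

lemma finRange_map_add (q : Fin n) :
    (List.finRange n).map (fun p => p + q) = (List.finRange n).rotate q.val := by
  apply List.ext_getElem (by simp)
  intro i h₁ h₂
  rw [List.getElem_rotate]
  simp only [List.getElem_map, List.getElem_finRange, List.length_finRange]
  ext
  simp [Fin.add_def]

lemma tau_FF_rot (α β : Fin n → Fin n) (q : Fin n) :
    tau (FF A (fun p => α (p + q)) (fun p => β (p + q))) = tau (FF A α β) := by
  unfold FF
  have h1 : ((List.finRange n).map fun p => A (α (p + q)) (β (p + q)))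
      = (((List.finRange n).map (fun p => p + q)).map fun i => A (α i) (β i)) := by
    rw [List.map_map]; rfl
  rw [h1, finRange_map_add, List.map_rotate, tau_prod_rotate]

/-- the list `k, 0, 1, …, k̂, …, n-1` -/
def pivL (k : Fin n) : List (Fin n) := k :: (List.finRange n).filter (fun i => i ≠ k)

lemma pivL_perm (k : Fin n) : (List.finRange n).Perm (pivL k) := by
  have h2 : (List.finRange n).filter (fun i => i ≠ k) = (List.finRange n).erase k := by
    rw [(List.nodup_finRange n).erase_eq_filter k]
    apply List.filter_congr
    intro x _
    rw [Bool.eq_iff_iff]; simp [bne_iff_ne]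
  rw [pivL, h2]
  exact List.perm_cons_erase (List.mem_finRange k)

lemma pivL_length (k : Fin n) : (pivL k).length = n := by
  rw [← (pivL_perm k).length_eq, List.length_finRange]

lemma pivL_nodup (k : Fin n) : (pivL k).Nodup :=
  (pivL_perm k).nodup_iff.mp (List.nodup_finRange n)

/-- the function enumerating `pivL k` -/
def sig (k : Fin n) : Fin n → Fin n := fun p => (pivL k).get (Fin.cast (pivL_length k).symm p)

lemma sig_inj (k : Fin n) : Function.Injective (sig k) :=
  (List.nodup_iff_injective_get.mp (pivL_nodup k)).comp fun _ _ h => by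
    simpa [Fin.ext_iff] using h

/-- `sig k` as a permutation -/
noncomputable def sigP (k : Fin n) : Equiv.Perm (Fin n) :=
  Equiv.ofBijective (sig k) (Finite.injective_iff_bijective.mp (sig_inj k))

lemma sigP_apply (k p : Fin n) : sigP k p = sig k p := rfl

lemma sig_zero (k : Fin n) : sig k 0 = k := rfl

lemma map_sig (k : Fin n) : (List.finRange n).map (sig k) = pivL k := by
  apply List.ext_getElem (by simp [pivL_length])
  intro i h₁ h₂
  simp only [List.getElem_map, List.getElem_finRange]
  rfl

/-- update through an injective reindexing -/
lemma update_comp {σ : Fin n → Fin n} (hinj : Function.Injective σ) {q q' : Fin n}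
    (h0 : σ q' = q) (f : Fin n → Fin n) (j : Fin n) :
    (fun p => Function.update f q j (σ p)) = Function.update (fun p => f (σ p)) q' j := by
  funext p
  rcases eq_or_ne p q' with rfl | hp
  · rw [h0, Function.update_self, Function.update_self]
  · have : σ p ≠ q := fun h => hp (hinj (h.trans h0.symm))
    rw [Function.update_of_ne this, Function.update_of_ne hp]

lemma sign_mul_cancel (α β σ : Equiv.Perm (Fin n)) :
    ((Equiv.Perm.sign (α * σ) : ℤ) * (Equiv.Perm.sign (β * σ) : ℤ))
      = (Equiv.Perm.sign α : ℤ) * (Equiv.Perm.sign β : ℤ) := by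
  have h : (Equiv.Perm.sign σ : ℤ) * (Equiv.Perm.sign σ : ℤ) = 1 := by
    rw [← Units.val_mul, Int.units_mul_self, Units.val_one]
  rw [Equiv.Perm.sign_mul, Equiv.Perm.sign_mul, Units.val_mul, Units.val_mul]
  calc (Equiv.Perm.sign α : ℤ) * (Equiv.Perm.sign σ : ℤ)
      * ((Equiv.Perm.sign β : ℤ) * (Equiv.Perm.sign σ : ℤ))
      = (Equiv.Perm.sign α : ℤ) * (Equiv.Perm.sign β : ℤ)
        * ((Equiv.Perm.sign σ : ℤ) * (Equiv.Perm.sign σ : ℤ)) := by ring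
    _ = _ := by rw [h, mul_one]

/-- the shifted sums -/
def E (r j q : Fin n) : R ⧸ cgrp R :=
  ∑ α : Equiv.Perm (Fin n),
    ∑ β ∈ Finset.univ.filter (fun β : Equiv.Perm (Fin n) => β q = r),
      ((Equiv.Perm.sign α : ℤ) * (Equiv.Perm.sign β : ℤ)) •
        tau (FF A α (Function.update (⇑β) q j))

lemma E_shift (r j q : Fin n) : E A r j q = E A r j 0 := by
  unfold E
  rw [← Finset.sum_product', ← Finset.sum_product']
  refine Finset.sum_nbij'
    (fun x => (x.1 * Equiv.addRight q, x.2 * Equiv.addRight q))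
    (fun x => (x.1 * (Equiv.addRight q)⁻¹, x.2 * (Equiv.addRight q)⁻¹)) ?_ ?_ ?_ ?_ ?_
  · rintro ⟨α, β⟩ hx
    simp only [Finset.mem_product, Finset.mem_filter, Finset.mem_univ, true_and] at hx ⊢
    show β (Equiv.addRight q 0) = r
    simpa using hx
  · rintro ⟨α, β⟩ hx
    simp only [Finset.mem_product, Finset.mem_filter, Finset.mem_univ, true_and] at hx ⊢
    show β ((Equiv.addRight q)⁻¹ q) = r
    have h0 : (Equiv.addRight q)⁻¹ q = 0 := Equiv.Perm.inv_eq_iff_eq.mpr (zero_add q).symm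
    rw [h0]; exact hx
  · rintro ⟨α, β⟩ _; simp only [mul_inv_cancel_right]
  · rintro ⟨α, β⟩ _; simp only [inv_mul_cancel_right]
  · rintro ⟨α, β⟩ hx
    simp only [Finset.mem_product, Finset.mem_filter, Finset.mem_univ, true_and] at hx
    rw [sign_mul_cancel]
    congr 1
    have hupd : (fun p => Function.update (⇑β) q j (Equiv.addRight q p))
        = Function.update (fun p => β (Equiv.addRight q p)) 0 j :=
      update_comp (Equiv.injective _) (by simp) _ _
    calc tau (FF A (⇑α) (Function.update (⇑β) q j))
        = tau (FF A (fun p => α (p + q))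
            (fun p => Function.update (⇑β) q j (p + q))) :=
          (tau_FF_rot A (⇑α) (Function.update (⇑β) q j) q).symm
      _ = tau (FF A (⇑(α * Equiv.addRight q)) (Function.update (⇑(β * Equiv.addRight q)) 0 j)) := by
          rw [show (fun p : Fin n => Function.update (⇑β) q j (p + q))
              = (fun p => Function.update (⇑β) q j (Equiv.addRight q p)) from rfl, hupd]
          rfl

/-- the bridge: entries of `preadj A * A` as pivot-at-`0` sums -/
lemma bridge (r j : Fin n) : tau ((preadj A * A) r j) = E A r j 0 := by
  have hentry : (preadj A * A) r j
      = ∑ k : Fin n,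
          ∑ α ∈ Finset.univ.filter (fun α : Equiv.Perm (Fin n) => α k = k),
            ∑ β ∈ Finset.univ.filter (fun β : Equiv.Perm (Fin n) => β k = r),
              ((Equiv.Perm.sign α : ℤ) * (Equiv.Perm.sign β : ℤ)) •
                ((((List.finRange n).filter (fun i => i ≠ k)).map
                    fun i => A (α i) (β i)).prod * A k j) := by
    rw [Matrix.mul_apply]
    simp only [preadj, Finset.sum_mul, smul_mul_assoc]
  rw [hentry, map_sum]
  simp only [map_sum, map_zsmul]
  have hterm : ∀ k : Fin n, ∀ α ∈ Finset.univ.filter (fun α : Equiv.Perm (Fin n) => α k = k),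
      ∀ β ∈ Finset.univ.filter (fun β : Equiv.Perm (Fin n) => β k = r),
      tau ((((List.finRange n).filter (fun i => i ≠ k)).map fun i => A (α i) (β i)).prod * A k j)
        = tau (FF A (fun p => α (sig k p))
            (Function.update (fun p => β (sig k p)) 0 j)) := by
    intro k α hα β hβ
    rw [Finset.mem_filter] at hα hβ
    have hmapeq : ((List.finRange n).filter (fun i => i ≠ k)).map (fun i => A (α i) (β i))
        = ((List.finRange n).filter (fun i => i ≠ k)).map
            (fun i => A (α i) (Function.update (⇑β) k j i)) := by
      apply List.map_congr_left
      intro i hi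
      have hik : i ≠ k := by simpa using List.of_mem_filter hi
      rw [Function.update_of_ne hik]
    have h2 : (((List.finRange n).filter (fun i => i ≠ k)).map fun i => A (α i) (β i)).prod * A k j
        = ((((List.finRange n).filter (fun i => i ≠ k)) ++ [k]).map
            (fun i => A (α i) (Function.update (⇑β) k j i))).prod := by
      rw [List.map_append, List.prod_append, hmapeq]
      simp [Function.update_self, hα.2]
    rw [h2, List.map_append, tau_prod_append, ← List.map_append]
    have h4 : (([k] ++ (List.finRange n).filter (fun i => i ≠ k)) : List (Fin n)) = pivL k := rfl
    rw [h4, ← map_sig, List.map_map]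
    unfold FF
    refine congrArg tau (congrArg List.prod (List.map_congr_left fun i _ => ?_))
    simp only [Function.comp_apply]
    rw [congrFun (update_comp (sig_inj k) (sig_zero k) (⇑β) j) i]
  rw [Finset.sum_congr rfl (fun k _ => Finset.sum_congr rfl (fun α hα =>
    Finset.sum_congr rfl (fun β hβ => by rw [hterm k α hα β hβ])))]
  have hre : ∀ k : Fin n,
      (∑ α ∈ Finset.univ.filter (fun α : Equiv.Perm (Fin n) => α k = k),
        ∑ β ∈ Finset.univ.filter (fun β : Equiv.Perm (Fin n) => β k = r),
          ((Equiv.Perm.sign α : ℤ) * (Equiv.Perm.sign β : ℤ)) •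
            tau (FF A (fun p => α (sig k p))
              (Function.update (fun p => β (sig k p)) 0 j)))
      = ∑ α ∈ Finset.univ.filter (fun α : Equiv.Perm (Fin n) => α 0 = k),
          ∑ β ∈ Finset.univ.filter (fun β : Equiv.Perm (Fin n) => β 0 = r),
            ((Equiv.Perm.sign α : ℤ) * (Equiv.Perm.sign β : ℤ)) •
              tau (FF A (⇑α) (Function.update (⇑β) 0 j)) := by
    intro k
    rw [← Finset.sum_product', ← Finset.sum_product']
    refine Finset.sum_nbij'
      (fun x => (x.1 * sigP k, x.2 * sigP k))
      (fun x => (x.1 * (sigP k)⁻¹, x.2 * (sigP k)⁻¹)) ?_ ?_ ?_ ?_ ?_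
    · rintro ⟨α, β⟩ hx
      simp only [Finset.mem_product, Finset.mem_filter, Finset.mem_univ, true_and] at hx ⊢
      exact ⟨hx.1, hx.2⟩
    · rintro ⟨α, β⟩ hx
      simp only [Finset.mem_product, Finset.mem_filter, Finset.mem_univ, true_and] at hx ⊢
      have hinv : (sigP k)⁻¹ k = 0 := Equiv.Perm.inv_eq_iff_eq.mpr rfl
      constructor
      · show α ((sigP k)⁻¹ k) = k
        rw [hinv]; exact hx.1
      · show β ((sigP k)⁻¹ k) = r
        rw [hinv]; exact hx.2
    · rintro ⟨α, β⟩ _; simp only [mul_inv_cancel_right]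
    · rintro ⟨α, β⟩ _; simp only [inv_mul_cancel_right]
    · rintro ⟨α, β⟩ hx
      dsimp only
      rw [sign_mul_cancel]
      rfl
  rw [Finset.sum_congr rfl (fun k _ => hre k)]
  rw [Finset.sum_fiberwise Finset.univ (fun α : Equiv.Perm (Fin n) => α 0)
    (fun α => ∑ β ∈ Finset.univ.filter (fun β : Equiv.Perm (Fin n) => β 0 = r),
      ((Equiv.Perm.sign α : ℤ) * (Equiv.Perm.sign β : ℤ)) •
        tau (FF A (⇑α) (Function.update (⇑β) 0 j)))]
  rfl

/-- collapsing the sum of shifted sums -/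
lemma sum_E (r j : Fin n) :
    (∑ q : Fin n, E A r j q)
      = ∑ α : Equiv.Perm (Fin n), ∑ β : Equiv.Perm (Fin n),
          ((Equiv.Perm.sign α : ℤ) * (Equiv.Perm.sign β : ℤ)) •
            tau (FF A (⇑α) (Function.update (⇑β) (β⁻¹ r) j)) := by
  unfold E
  rw [Finset.sum_comm]
  apply Finset.sum_congr rfl
  intro α _
  simp only [Finset.sum_filter]
  rw [Finset.sum_comm]
  apply Finset.sum_congr rfl
  intro β _
  have hcond : ∀ q : Fin (m + 1), (β q = r) = (β⁻¹ r = q) := fun q =>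
    propext ⟨fun h => Equiv.Perm.inv_eq_iff_eq.mpr h.symm,
      fun h => (Equiv.Perm.inv_eq_iff_eq.mp h).symm⟩
  simp only [hcond]
  rw [Finset.sum_ite_eq]
  rw [if_pos (Finset.mem_univ _)]

lemma upd_swap (r j : Fin n) (β : Equiv.Perm (Fin n)) :
    Function.update (⇑(Equiv.swap r j * β)) ((Equiv.swap r j * β)⁻¹ r) j
      = Function.update (⇑β) (β⁻¹ r) j := by
  have hinv : (Equiv.swap r j * β)⁻¹ r = β⁻¹ j := by
    rw [_root_.mul_inv_rev, Equiv.Perm.mul_apply, Equiv.swap_inv, Equiv.swap_apply_left]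
  rw [hinv]
  funext p
  rcases eq_or_ne p (β⁻¹ j) with rfl | h1
  · rw [Function.update_self]
    rcases eq_or_ne (β⁻¹ j) (β⁻¹ r) with he | hne
    · rw [he, Function.update_self]
    · rw [Function.update_of_ne hne, Equiv.Perm.apply_inv_self]
  · rw [Function.update_of_ne h1]
    rcases eq_or_ne p (β⁻¹ r) with rfl | h2
    · rw [Function.update_self, Equiv.Perm.mul_apply, Equiv.Perm.apply_inv_self,
        Equiv.swap_apply_left]
    · rw [Function.update_of_ne h2, Equiv.Perm.mul_apply]
      have hbj : β p ≠ j := fun h => h1 (by rw [← h, Equiv.Perm.inv_apply_self])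
      have hbr : β p ≠ r := fun h => h2 (by rw [← h, Equiv.Perm.inv_apply_self])
      rw [Equiv.swap_apply_of_ne_of_ne hbr hbj]

lemma offdiag (r j : Fin n) (hrj : r ≠ j) :
    (∑ α : Equiv.Perm (Fin n), ∑ β : Equiv.Perm (Fin n),
        ((Equiv.Perm.sign α : ℤ) * (Equiv.Perm.sign β : ℤ)) •
          tau (FF A (⇑α) (Function.update (⇑β) (β⁻¹ r) j))) = 0 := by
  apply Finset.sum_eq_zero
  intro α _
  apply Finset.sum_ninvolution (fun β => Equiv.swap r j * β)
  · intro β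
    have hsgn : ((Equiv.Perm.sign α : ℤ) * (Equiv.Perm.sign (Equiv.swap r j * β) : ℤ))
        = -((Equiv.Perm.sign α : ℤ) * (Equiv.Perm.sign β : ℤ)) := by
      rw [Equiv.Perm.sign_mul, Equiv.Perm.sign_swap hrj]
      push_cast
      ring
    rw [upd_swap, hsgn, neg_smul]
    exact add_neg_cancel _
  · intro β _
    intro h
    have h1 : Equiv.swap r j = 1 := mul_right_cancel (by rw [h, one_mul])
    exact hrj (Equiv.swap_eq_one_iff.mp h1)
  · intro β; exact Finset.mem_univ _
  · intro β
    rw [← mul_assoc, Equiv.swap_mul_self, one_mul]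

lemma tau_trace :
    tau (Matrix.trace (preadj A * A))
      = ∑ α : Equiv.Perm (Fin n), ∑ β : Equiv.Perm (Fin n),
          ((Equiv.Perm.sign α : ℤ) * (Equiv.Perm.sign β : ℤ)) • tau (FF A (⇑α) (⇑β)) := by
  simp only [Matrix.trace, Matrix.diag]
  rw [map_sum]
  rw [Finset.sum_congr rfl (fun r _ => bridge A r r)]
  unfold E
  rw [Finset.sum_comm]
  apply Finset.sum_congr rfl
  intro α _
  have hupd : ∀ r : Fin n, ∀ β ∈ Finset.univ.filter (fun β : Equiv.Perm (Fin n) => β 0 = r),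
      ((Equiv.Perm.sign α : ℤ) * (Equiv.Perm.sign β : ℤ)) •
          tau (FF A (⇑α) (Function.update (⇑β) 0 r))
        = ((Equiv.Perm.sign α : ℤ) * (Equiv.Perm.sign β : ℤ)) • tau (FF A (⇑α) (⇑β)) := by
    intro r β hβ
    rw [Finset.mem_filter] at hβ
    rw [← hβ.2, Function.update_eq_self]
  rw [Finset.sum_congr rfl (fun r _ => Finset.sum_congr rfl (hupd r))]
  exact Finset.sum_fiberwise Finset.univ (fun β : Equiv.Perm (Fin n) => β 0) _

lemma diag_done (r : Fin n) :
    (m + 1) • tau ((preadj A * A) r r) = tau (Matrix.trace (preadj A * A)) := by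
  rw [bridge]
  have h1 : (m + 1) • E A r r 0 = ∑ q : Fin n, E A r r q := by
    rw [Finset.sum_congr rfl (fun q _ => E_shift A r r q)]
    simp
  rw [h1, sum_E, tau_trace]
  apply Finset.sum_congr rfl
  intro α _
  apply Finset.sum_congr rfl
  intro β _
  congr 1
  rw [show Function.update (⇑β) (β⁻¹ r) r = Function.update (⇑β) (β⁻¹ r) (β (β⁻¹ r)) by
    rw [Equiv.Perm.apply_inv_self], Function.update_eq_self]

lemma offdiag_done (r j : Fin n) (hrj : r ≠ j) :
    (m + 1) • tau ((preadj A * A) r j) = 0 := by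
  rw [bridge]
  have h1 : (m + 1) • E A r j 0 = ∑ q : Fin n, E A r j q := by
    rw [Finset.sum_congr rfl (fun q _ => E_shift A r j q)]
    simp
  rw [h1, sum_E, offdiag A r j hrj]

end Pos

end PreadjAux

theorem preadj_mul_trace_zero_and_commutator {R : Type*} [Ring R] {n : ℕ}
    (A : Matrix (Fin n) (Fin n) R) :
    Matrix.trace (n • (preadj A * A) - Matrix.scalar (Fin n) (Matrix.trace (preadj A * A))) = 0 ∧
    ∀ i j, (n • (preadj A * A) - Matrix.scalar (Fin n) (Matrix.trace (preadj A * A))) i j ∈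
      AddSubgroup.closure {x : R | ∃ u v : R, x = u * v - v * u} := by
  constructor
  · rw [Matrix.trace_sub, Matrix.trace_smul, Matrix.scalar_apply, Matrix.trace_diagonal]
    simp
  · intro i j
    match n, A with
    | 0, A => exact i.elim0
    | (m + 1), A =>
      simp only [Matrix.sub_apply, Matrix.smul_apply, Matrix.scalar_apply,
        Matrix.diagonal_apply]
      apply PreadjAux.mem_of_tau
      rw [map_sub, map_nsmul]
      rcases eq_or_ne i j with rfl | hij
      · rw [if_pos rfl, PreadjAux.diag_done A i, sub_self]
      · rw [if_neg hij, map_zero, sub_zero, PreadjAux.offdiag_done A i j hij]
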